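/- Under the standing assumptions on (A, B, F), for a ∈ A and ℓ ∈ Hom_k(A,k) define a • ℓ ∈ Hom_k(A,k) by (a • ℓ)(a') = ℓ(a·a'). Then: (a) if ℓ ∈ (A*)^B then a • ℓ ∈ (A*)^B; (b) a • (b • ℓ) = (b·a) • ℓ for all a, b ∈ A, so • makes (A*)^B a module over the opposite algebra A^op; (c) for all a ∈ A and ℓ, ℓ' ∈ (A*)^B, writing Δ(a) = Σᵢ aᵢ⁽¹⁾ ⊗ aᵢ⁽²⁾ (any finite-sum representation), one has a • (ℓ * ℓ') = Σᵢ (aᵢ⁽¹⁾ • ℓ) * (aᵢ⁽²⁾ • ℓ'). Thus ((A*)^B, *) is an algebra-module over (A^op, Δ). -/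

import Mathlib

open TensorProduct

variable (k A : Type*) [CommRing k] [Ring A] [Bialgebra k A]

/-- The submodule `X ⊗̄ Y` of `A ⊗ A` spanned by elementary tensors from `X` and `Y`. -/
def tens2 (X Y : Set A) : Submodule k (A ⊗[k] A) :=
  Submodule.span k {z | ∃ x ∈ X, ∃ y ∈ Y, z = x ⊗ₜ[k] y}

/-- The submodule `X ⊗̄ Y ⊗̄ Z` of `(A ⊗ A) ⊗ A`. -/
def tens3 (X Y Z : Set A) : Submodule k ((A ⊗[k] A) ⊗[k] A) :=
  Submodule.span k {w | ∃ x ∈ X, ∃ y ∈ Y, ∃ z ∈ Z, w = (x ⊗ₜ[k] y) ⊗ₜ[k] z}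

/-- `ℓ ⊗ ℓ'` as a linear form on `A ⊗ A` (composite `A ⊗ A → k ⊗ k ≅ k`). -/
noncomputable def pairForm (ℓ ℓ' : A →ₗ[k] k) : A ⊗[k] A →ₗ[k] k :=
  (TensorProduct.lid k k).toLinearMap ∘ₗ TensorProduct.map ℓ ℓ'

/-- The twisted product `(ℓ * ℓ')(a) = (ℓ ⊗ ℓ')(Δ(a)·F⁻¹)`, where `Finv = F⁻¹`. -/
noncomputable def starProd (Finv : A ⊗[k] A) (ℓ ℓ' : A →ₗ[k] k) : A →ₗ[k] k :=
  pairForm k A ℓ ℓ' ∘ₗ LinearMap.mulRight k Finv ∘ₗ Coalgebra.comul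

/-- `(A*)^B`: the right `B`-invariant linear forms on `A`. -/
def invForms (S : Set A) : Set (A →ₗ[k] k) :=
  {ℓ | ∀ a : A, ∀ b ∈ S, ℓ (a * b) = ℓ a * Coalgebra.counit (R := k) b}

/-- `Δ ⊗ id` as a map `A ⊗ A → (A ⊗ A) ⊗ A`. -/
noncomputable def DeltaId : A ⊗[k] A →ₗ[k] (A ⊗[k] A) ⊗[k] A :=
  TensorProduct.map Coalgebra.comul LinearMap.id

/-- `id ⊗ Δ` as a map `A ⊗ A → (A ⊗ A) ⊗ A` (reassociated). -/
noncomputable def IdDelta : A ⊗[k] A →ₗ[k] (A ⊗[k] A) ⊗[k] A :=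
  (TensorProduct.assoc k A A A).symm.toLinearMap ∘ₗ
    TensorProduct.map LinearMap.id Coalgebra.comul

/-- `1 ⊗ x` as an element of `(A ⊗ A) ⊗ A`, for `x : A ⊗ A`. -/
noncomputable def oneTens (x : A ⊗[k] A) : (A ⊗[k] A) ⊗[k] A :=
  (TensorProduct.assoc k A A A).symm ((1 : A) ⊗ₜ[k] x)

/-- `Φ_B = (F⊗1)·((Δ⊗id)F)·((1⊗F)·((id⊗Δ)F))⁻¹`, written using `F⁻¹ = Finv`. -/
noncomputable def PhiB (F Finv : A ⊗[k] A) : (A ⊗[k] A) ⊗[k] A :=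
  (F ⊗ₜ[k] (1 : A)) * DeltaId k A F * IdDelta k A Finv * oneTens k A Finv

/-- The action `(a • ℓ)(a') = ℓ(a·a')`, making `Hom_k(A,k)` a module over `A^op`. -/
noncomputable def act (a : A) (ℓ : A →ₗ[k] k) : A →ₗ[k] k :=
  ℓ ∘ₗ LinearMap.mulLeft k a

theorem stmt8 (B : Subalgebra k A) (F Finv : A ⊗[k] A)
    (hinv1 : F * Finv = 1) (hinv2 : Finv * F = 1)
    (hcF1 : TensorProduct.lid k A (TensorProduct.map Coalgebra.counit LinearMap.id F) = 1)
    (hcF2 : TensorProduct.rid k A (TensorProduct.map LinearMap.id Coalgebra.counit F) = 1)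
    (hFB : ∀ b ∈ B, F * Coalgebra.comul (R := k) b * Finv ∈ tens2 k A (B : Set A) (B : Set A))
    (hPhi : PhiB k A F Finv ∈ tens3 k A (B : Set A) (B : Set A) (B : Set A)) :
    -- (a) the action preserves `(A*)^B`
    (∀ a : A, ∀ ℓ ∈ invForms k A (B : Set A), act k A a ℓ ∈ invForms k A (B : Set A)) ∧
    -- (b) `a • (b • ℓ) = (b·a) • ℓ`: a right action, i.e. a module over `A^op`
    (∀ a b : A, ∀ ℓ : A →ₗ[k] k, act k A a (act k A b ℓ) = act k A (b * a) ℓ) ∧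
    -- (c) module-algebra compatibility: `a • (ℓ * ℓ') = Σᵢ (aᵢ⁽¹⁾ • ℓ) * (aᵢ⁽²⁾ • ℓ')`
    (∀ a : A, ∀ ℓ ∈ invForms k A (B : Set A), ∀ ℓ' ∈ invForms k A (B : Set A),
      ∀ (ι : Type) (s : Finset ι) (a1 a2 : ι → A),
        Coalgebra.comul (R := k) a = ∑ i ∈ s, a1 i ⊗ₜ[k] a2 i →
        act k A a (starProd k A Finv ℓ ℓ') =
          ∑ i ∈ s, starProd k A Finv (act k A (a1 i) ℓ) (act k A (a2 i) ℓ')) := by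
  refine ⟨?_, ?_, ?_⟩
  · intro a ℓ hℓ a' b hb
    simpa [act, mul_assoc] using hℓ (a * a') b hb
  · intro a b ℓ
    ext x
    simp [act, mul_assoc]
  · intro a ℓ hℓ ℓ' hℓ' ι s a1 a2 hΔ
    ext x
    have key : ∀ (p q : A) (z : A ⊗[k] A),
        pairForm k A (act k A p ℓ) (act k A q ℓ') z
          = pairForm k A ℓ ℓ' ((p ⊗ₜ[k] q) * z) := by
      intro p q z
      induction z using TensorProduct.induction_on with
      | zero => simp
      | tmul u v => simp [pairForm, act, Algebra.TensorProduct.tmul_mul_tmul]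
      | add u v hu hv => simp only [map_add, mul_add, hu, hv]
    have hmul : Coalgebra.comul (R := k) (a * x)
        = Coalgebra.comul (R := k) a * Coalgebra.comul (R := k) x :=
      map_mul (Bialgebra.comulAlgHom k A) a x
    simp only [act, starProd, LinearMap.coe_comp, Function.comp_apply,
      LinearMap.mulLeft_apply, LinearMap.mulRight_apply, LinearMap.coe_sum,
      Finset.sum_apply]
    rw [hmul, hΔ]
    rw [Finset.sum_mul, Finset.sum_mul, map_sum]
    refine Finset.sum_congr rfl fun i _ => ?_
    rw [mul_assoc]; exact (key (a1 i) (a2 i) _).symm
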